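/- Let z₁,…,z_s ∈ ℂ with |z_i − z_j| ≥ 1 for i ≠ j. Then for each n ∈ ℕ there exist polynomials P₁,…,P_s ∈ 𝒫_{ns−1}^ℂ with P₁ + … + P_s ≡ 1, and for every δ < 1/2, every i ≠ j, and every z with |z − z_j| ≤ δ: |P_i(z)| ≤ (2δ)^n (2D+1)^{n(s−1)}, where D := diam{z₁,…,z_s}. -/

import Mathlib

open Polynomial PowerSeries Metric

lemma invOneSubPow_mul (p q : ℕ) :
    invOneSubPow ℝ p * invOneSubPow ℝ q = invOneSubPow ℝ (p + q) := by
  rw [invOneSubPow_eq_inv_one_sub_pow, invOneSubPow_eq_inv_one_sub_pow,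
    invOneSubPow_eq_inv_one_sub_pow, ← pow_add]

lemma coeff_mul_norm_le (f g : PowerSeries ℂ) (F G : ℕ → ℝ)
    (hf : ∀ m, ‖PowerSeries.coeff (R := ℂ) m f‖ ≤ F m)
    (hg : ∀ m, ‖PowerSeries.coeff (R := ℂ) m g‖ ≤ G m) (m : ℕ) :
    ‖PowerSeries.coeff (R := ℂ) m (f * g)‖ ≤ ∑ ab ∈ Finset.HasAntidiagonal.antidiagonal m, F ab.1 * G ab.2 := by
  rw [PowerSeries.coeff_mul]
  refine (norm_sum_le _ _).trans (Finset.sum_le_sum fun ab _ => ?_)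
  rw [norm_mul]
  exact mul_le_mul (hf _) (hg _) (norm_nonneg _) ((norm_nonneg _).trans (hf _))

lemma norm_coeff_g_le (n : ℕ) (hn : 0 < n) (c : ℂ) (hc : 1 ≤ ‖c‖) (m : ℕ) :
    ‖PowerSeries.coeff (R := ℂ) m (PowerSeries.rescale (-c⁻¹) (invOneSubPow ℂ n).val)‖
      ≤ PowerSeries.coeff (R := ℝ) m (invOneSubPow ℝ n).val := by
  rw [PowerSeries.coeff_rescale, invOneSubPow_val_eq_mk_sub_one_add_choose_of_pos _ _ hn,
    invOneSubPow_val_eq_mk_sub_one_add_choose_of_pos _ _ hn, PowerSeries.coeff_mk,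
    PowerSeries.coeff_mk, norm_mul, norm_pow, norm_neg, norm_inv]
  calc ‖c‖⁻¹ ^ m * ‖(((n - 1 + m).choose (n - 1) : ℕ) : ℂ)‖
      ≤ 1 * ((n - 1 + m).choose (n - 1) : ℝ) := by
        apply mul_le_mul
        · exact pow_le_one₀ (by positivity) (inv_le_one_of_one_le₀ hc)
        · simp
        · positivity
        · norm_num
    _ = _ := by simp

lemma norm_coeff_prod_le {ι : Type*} [DecidableEq ι] (n : ℕ) (hn : 0 < n) (t : Finset ι)
    (c : ι → ℂ) (hc : ∀ k ∈ t, 1 ≤ ‖c k‖) (m : ℕ) :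
    ‖PowerSeries.coeff (R := ℂ) m (∏ k ∈ t, PowerSeries.rescale (-(c k)⁻¹) (invOneSubPow ℂ n).val)‖
      ≤ PowerSeries.coeff (R := ℝ) m (invOneSubPow ℝ (n * t.card)).val := by
  induction t using Finset.cons_induction generalizing m with
  | empty =>
      simp only [Finset.prod_empty, Finset.card_empty, Nat.mul_zero, invOneSubPow_zero,
        Units.val_one]
      rw [PowerSeries.coeff_one, PowerSeries.coeff_one]
      split <;> simp
  | cons k t hk ih =>
      rw [Finset.prod_cons]
      have hc' : ∀ k' ∈ t, 1 ≤ ‖c k'‖ := fun k' hk' => hc k' (Finset.mem_cons_of_mem hk')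
      calc ‖PowerSeries.coeff (R := ℂ) m (PowerSeries.rescale (-(c k)⁻¹) (invOneSubPow ℂ n).val *
              ∏ k' ∈ t, PowerSeries.rescale (-(c k')⁻¹) (invOneSubPow ℂ n).val)‖
          ≤ ∑ ab ∈ Finset.HasAntidiagonal.antidiagonal m,
              (PowerSeries.coeff (R := ℝ) ab.1 (invOneSubPow ℝ n).val) *
              (PowerSeries.coeff (R := ℝ) ab.2 (invOneSubPow ℝ (n * t.card)).val) :=
            coeff_mul_norm_le _ _ _ _
              (norm_coeff_g_le n hn (c k) (hc k (Finset.mem_cons_self k t)))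
              (fun m' => ih hc' m') m
        _ = PowerSeries.coeff (R := ℝ) m ((invOneSubPow ℝ n).val * (invOneSubPow ℝ (n * t.card)).val) :=
            (PowerSeries.coeff_mul _ _ _).symm
        _ = _ := by
            rw [← Units.val_mul, invOneSubPow_mul, Finset.card_cons, Nat.mul_add, Nat.mul_one,
              Nat.add_comm]

lemma factor_inv (n : ℕ) (c : ℂ) (hc : c ≠ 0) :
    (((Polynomial.X + Polynomial.C c : Polynomial ℂ) ^ n : Polynomial ℂ) : PowerSeries ℂ) *
      (PowerSeries.C (R := ℂ) (c⁻¹ ^ n) * PowerSeries.rescale (-c⁻¹) (invOneSubPow ℂ n).val) = 1 := by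
  have h2 : PowerSeries.C (R := ℂ) c⁻¹ * ((Polynomial.X + Polynomial.C c : Polynomial ℂ) : PowerSeries ℂ)
      = PowerSeries.rescale (-c⁻¹) (1 - PowerSeries.X) := by
    rw [Polynomial.coe_add, Polynomial.coe_X, Polynomial.coe_C, map_sub, map_one, rescale_X,
      map_neg, mul_add, ← map_mul, inv_mul_cancel₀ hc, map_one]
    ring
  calc (((Polynomial.X + Polynomial.C c : Polynomial ℂ) ^ n : Polynomial ℂ) : PowerSeries ℂ) *
        (PowerSeries.C (R := ℂ) (c⁻¹ ^ n) * PowerSeries.rescale (-c⁻¹) (invOneSubPow ℂ n).val)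
      = (PowerSeries.C (R := ℂ) c⁻¹ * ((Polynomial.X + Polynomial.C c : Polynomial ℂ) :
            PowerSeries ℂ)) ^ n * PowerSeries.rescale (-c⁻¹) (invOneSubPow ℂ n).val := by
        rw [Polynomial.coe_pow, mul_pow, map_pow]
        ring
    _ = PowerSeries.rescale (-c⁻¹) ((1 - PowerSeries.X) ^ n * (invOneSubPow ℂ n).val) := by
        rw [h2, map_mul, map_pow]
    _ = 1 := by
        rw [← invOneSubPow_inv_eq_one_sub_pow, (invOneSubPow ℂ n).inv_val, map_one]

lemma choose_le_two_pow' {k r : ℕ} (h : r ≤ k) : k.choose r ≤ 2 ^ k := by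
  calc k.choose r ≤ ∑ m ∈ Finset.range (k + 1), k.choose m :=
        Finset.single_le_sum (fun m _ => Nat.zero_le _)
          (Finset.mem_range.2 (Nat.lt_succ_of_le h))
    _ = 2 ^ k := Nat.sum_range_choose k

lemma X_pow_dvd_trunc_mul_sub_one {K : Type*} [Field K] (n : ℕ) (F : Polynomial K)
    (G : PowerSeries K) (h : (F : PowerSeries K) * G = 1) :
    (Polynomial.X : Polynomial K) ^ n ∣ (trunc n G : Polynomial K) * F - 1 := by
  rw [Polynomial.X_pow_dvd_iff]
  intro d hd
  rw [Polynomial.coeff_sub, Polynomial.coeff_one]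
  have h1 : ((trunc n G : Polynomial K) * F).coeff d
      = PowerSeries.coeff (R := K) d ((trunc n G : Polynomial K) * (F : PowerSeries K)) := by
    rw [← Polynomial.coe_mul, Polynomial.coeff_coe]
  have h2 : PowerSeries.coeff (R := K) d ((trunc n G : Polynomial K) * (F : PowerSeries K))
      = PowerSeries.coeff (R := K) d (G * (F : PowerSeries K)) := by
    rw [PowerSeries.coeff_mul, PowerSeries.coeff_mul]
    refine Finset.sum_congr rfl fun ab hab => ?_
    have hab1 : ab.1 < n := by
      have := Finset.HasAntidiagonal.antidiagonal.fst_le hab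
      omega
    rw [Polynomial.coeff_coe, PowerSeries.coeff_trunc, if_pos hab1]
  rw [h1, h2, mul_comm, h, PowerSeries.coeff_one]
  split <;> simp_all

noncomputable def pG (n : ℕ) {s : ℕ} (z : Fin s → ℂ) (i : Fin s) : PowerSeries ℂ :=
  PowerSeries.C (R := ℂ) (∏ k ∈ Finset.univ.erase i, (z i - z k)⁻¹ ^ n) *
    ∏ k ∈ Finset.univ.erase i, PowerSeries.rescale (-(z i - z k)⁻¹) (invOneSubPow ℂ n).val

noncomputable def pA (n : ℕ) {s : ℕ} (z : Fin s → ℂ) (i : Fin s) : Polynomial ℂ :=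
  trunc n (pG n z i)

noncomputable def pQ (n : ℕ) {s : ℕ} (z : Fin s → ℂ) (i : Fin s) : Polynomial ℂ :=
  ∏ k ∈ Finset.univ.erase i, (Polynomial.X - Polynomial.C (z k)) ^ n

noncomputable def pF (n : ℕ) {s : ℕ} (z : Fin s → ℂ) (i : Fin s) : Polynomial ℂ :=
  ∏ k ∈ Finset.univ.erase i, (Polynomial.X + Polynomial.C (z i - z k)) ^ n

noncomputable def pP (n : ℕ) {s : ℕ} (z : Fin s → ℂ) (i : Fin s) : Polynomial ℂ :=
  (pA n z i).comp (Polynomial.X - Polynomial.C (z i)) * pQ n z i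

lemma pFG (n : ℕ) {s : ℕ} (z : Fin s → ℂ) (i : Fin s)
    (hz : ∀ k ∈ Finset.univ.erase i, z i - z k ≠ 0) :
    (↑(pF n z i) : PowerSeries ℂ) * pG n z i = 1 := by
  have hcoe : (↑(pF n z i) : PowerSeries ℂ)
      = ∏ k ∈ Finset.univ.erase i,
          (((Polynomial.X + Polynomial.C (z i - z k)) ^ n : Polynomial ℂ) : PowerSeries ℂ) := by
    rw [pF, ← Polynomial.coeToPowerSeries.ringHom_apply, map_prod]
    simp only [Polynomial.coeToPowerSeries.ringHom_apply]
  rw [hcoe, pG, map_prod, mul_left_comm, ← Finset.prod_mul_distrib, ← Finset.prod_mul_distrib]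
  have h1 : ∀ k ∈ Finset.univ.erase i,
      PowerSeries.C (R := ℂ) ((z i - z k)⁻¹ ^ n) *
        ((((Polynomial.X + Polynomial.C (z i - z k)) ^ n : Polynomial ℂ) : PowerSeries ℂ) *
          PowerSeries.rescale (-(z i - z k)⁻¹) (invOneSubPow ℂ n).val) = 1 := by
    intro k hk
    rw [mul_left_comm]
    exact factor_inv _ _ (hz k hk)
  rw [Finset.prod_congr rfl h1, Finset.prod_const_one]

lemma pFQ (n : ℕ) {s : ℕ} (z : Fin s → ℂ) (i : Fin s) :
    (pF n z i).comp (Polynomial.X - Polynomial.C (z i)) = pQ n z i := by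
  rw [pF, pQ, prod_comp]
  refine Finset.prod_congr rfl fun k _ => ?_
  rw [pow_comp, add_comp, X_comp, C_comp, map_sub]
  ring

lemma pP_sub_one_dvd (n : ℕ) {s : ℕ} (z : Fin s → ℂ) (i : Fin s)
    (hz : ∀ k ∈ Finset.univ.erase i, z i - z k ≠ 0) :
    (Polynomial.X - Polynomial.C (z i)) ^ n ∣ pP n z i - 1 := by
  obtain ⟨q, hq⟩ := X_pow_dvd_trunc_mul_sub_one n (pF n z i) (pG n z i) (pFG n z i hz)
  refine ⟨q.comp (Polynomial.X - Polynomial.C (z i)), ?_⟩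
  have h1 : pP n z i - 1
      = (trunc n (pG n z i) * pF n z i - 1).comp (Polynomial.X - Polynomial.C (z i)) := by
    rw [sub_comp, mul_comp, one_comp, pFQ, pP, pA]
  rw [h1, hq, mul_comp, pow_comp, X_comp]

lemma pP_dvd (n : ℕ) {s : ℕ} (z : Fin s → ℂ) (i j : Fin s) (hji : j ≠ i) :
    (Polynomial.X - Polynomial.C (z j)) ^ n ∣ pP n z i :=
  Dvd.dvd.mul_left
    (Finset.dvd_prod_of_mem _ (Finset.mem_erase.2 ⟨hji, Finset.mem_univ j⟩)) _

lemma pA_deg (n : ℕ) {s : ℕ} (z : Fin s → ℂ) (i : Fin s) (hn : 1 ≤ n) :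
    (pA n z i).natDegree ≤ n - 1 := by
  have h : n - 1 + 1 = n := by omega
  rw [pA, ← h]
  exact Nat.lt_succ_iff.1 (natDegree_trunc_lt _ _)

lemma pQ_deg (n : ℕ) {s : ℕ} (z : Fin s → ℂ) (i : Fin s) :
    (pQ n z i).natDegree ≤ (s - 1) * n := by
  refine (natDegree_prod_le _ _).trans ?_
  have h1 : ∀ k ∈ Finset.univ.erase i,
      ((Polynomial.X - Polynomial.C (z k)) ^ n).natDegree = n := fun k _ => by
    rw [natDegree_pow, natDegree_X_sub_C, mul_one]
  rw [Finset.sum_congr rfl h1, Finset.sum_const, Finset.card_erase_of_mem (Finset.mem_univ i),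
    Finset.card_univ, Fintype.card_fin, smul_eq_mul]

lemma pP_deg (n : ℕ) {s : ℕ} (z : Fin s → ℂ) (i : Fin s) (hn : 1 ≤ n) :
    (pP n z i).natDegree ≤ (n - 1) + (s - 1) * n := by
  refine natDegree_mul_le.trans (add_le_add ?_ (pQ_deg n z i))
  calc ((pA n z i).comp (Polynomial.X - Polynomial.C (z i))).natDegree
      ≤ (pA n z i).natDegree * (Polynomial.X - Polynomial.C (z i)).natDegree :=
        natDegree_comp_le
    _ ≤ n - 1 := by rw [natDegree_X_sub_C, mul_one]; exact pA_deg n z i hn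

lemma pA_coeff (n : ℕ) {s : ℕ} (z : Fin s → ℂ) (i : Fin s) (hn : 0 < n)
    (hz1 : ∀ k ∈ Finset.univ.erase i, 1 ≤ ‖z i - z k‖) (hN : 0 < n * (s - 1)) (m : ℕ) :
    ‖(pA n z i).coeff m‖ ≤ ((n * (s - 1) - 1 + m).choose (n * (s - 1) - 1) : ℝ) := by
  rw [pA, PowerSeries.coeff_trunc]
  split
  · rw [pG, PowerSeries.coeff_C_mul, norm_mul]
    have hconst : ‖∏ k ∈ Finset.univ.erase i, (z i - z k)⁻¹ ^ n‖ ≤ 1 := by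
      rw [norm_prod]
      refine Finset.prod_le_one (fun k _ => by positivity) (fun k hk => ?_)
      rw [norm_pow, norm_inv]
      exact pow_le_one₀ (by positivity) (inv_le_one_of_one_le₀ (hz1 k hk))
    have hprod := norm_coeff_prod_le n hn (Finset.univ.erase i) (fun k => z i - z k) hz1 m
    rw [Finset.card_erase_of_mem (Finset.mem_univ i), Finset.card_univ, Fintype.card_fin,
      invOneSubPow_val_eq_mk_sub_one_add_choose_of_pos _ _ hN, PowerSeries.coeff_mk] at hprod
    calc ‖∏ k ∈ Finset.univ.erase i, (z i - z k)⁻¹ ^ n‖ *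
          ‖PowerSeries.coeff (R := ℂ) m (∏ k ∈ Finset.univ.erase i,
            PowerSeries.rescale (-(z i - z k)⁻¹) (invOneSubPow ℂ n).val)‖
        ≤ 1 * ((n * (s - 1) - 1 + m).choose (n * (s - 1) - 1) : ℝ) :=
          mul_le_mul hconst hprod (norm_nonneg _) zero_le_one
      _ = _ := one_mul _
  · simp

theorem partition_polynomials_exist (s n : ℕ) (hs : 1 ≤ s) (hn : 1 ≤ n)
    (z : Fin s → ℂ) (hsep : ∀ i j : Fin s, i ≠ j → 1 ≤ ‖z i - z j‖) :
    ∃ P : Fin s → Polynomial ℂ,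
      (∀ i, (P i).natDegree ≤ n * s - 1) ∧
      (∑ i, P i) = 1 ∧
      ∀ δ : ℝ, 0 ≤ δ → δ < 1 / 2 →
        ∀ i j : Fin s, i ≠ j → ∀ w : ℂ, ‖w - z j‖ ≤ δ →
          ‖(P i).eval w‖ ≤
            (2 * δ) ^ n * (2 * Metric.diam (Set.range z) + 1) ^ (n * (s - 1)) := by
  classical
  have hzinj : Function.Injective z := by
    intro i j h
    by_contra hne
    have h1 := hsep i j hne
    rw [h, sub_self, norm_zero] at h1
    linarith
  have hz1 : ∀ i : Fin s, ∀ k ∈ Finset.univ.erase i, 1 ≤ ‖z i - z k‖ := by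
    intro i k hk
    exact hsep i k ((Finset.mem_erase.1 hk).1).symm
  have hne0 : ∀ i : Fin s, ∀ k ∈ Finset.univ.erase i, z i - z k ≠ 0 := by
    intro i k hk h
    have h1 := hz1 i k hk
    rw [h, norm_zero] at h1
    linarith
  refine ⟨fun i => pP n z i, fun i => ?_, ?_, ?_⟩
  · -- degrees
    refine (pP_deg n z i hn).trans ?_
    obtain ⟨n', rfl⟩ : ∃ n', n = n' + 1 := ⟨n - 1, by omega⟩
    obtain ⟨s', rfl⟩ : ∃ s', s = s' + 1 := ⟨s - 1, by omega⟩
    simp only [Nat.add_sub_cancel]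
    have h2 : s' * (n' + 1) = n' * s' + s' := by ring
    have h3 : (n' + 1) * (s' + 1) = n' * s' + n' + s' + 1 := by ring
    rw [h2, h3]
    generalize n' * s' = K
    omega
  · -- sum equals one
    have hdvd : ∀ j : Fin s,
        (Polynomial.X - Polynomial.C (z j)) ^ n ∣ (∑ i, pP n z i) - 1 := by
      intro j
      have hsplit : (∑ i, pP n z i) - 1
          = (pP n z j - 1) + ∑ i ∈ Finset.univ.erase j, pP n z i := by
        rw [← Finset.add_sum_erase _ _ (Finset.mem_univ j)]
        ring
      rw [hsplit]
      exact dvd_add (pP_sub_one_dvd n z j (hne0 j))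
        (Finset.dvd_sum fun i hi => pP_dvd n z i j ((Finset.mem_erase.1 hi).1).symm)
    have hprod : (∏ j : Fin s, (Polynomial.X - Polynomial.C (z j)) ^ n)
        ∣ (∑ i, pP n z i) - 1 :=
      Finset.prod_dvd_of_coprime
        (fun a _ b _ hab => ((pairwise_coprime_X_sub_C hzinj) hab).pow)
        (fun j _ => hdvd j)
    have hR : (∑ i, pP n z i) - 1 = 0 := by
      by_contra hR0
      have hdeg1 : (∏ j : Fin s, (Polynomial.X - Polynomial.C (z j)) ^ n).natDegree
          = s * n := by
        rw [natDegree_prod_of_monic _ _ (fun j _ => (monic_X_sub_C (z j)).pow n)]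
        have h1 : ∀ j ∈ (Finset.univ : Finset (Fin s)),
            ((Polynomial.X - Polynomial.C (z j)) ^ n).natDegree = n := fun j _ => by
          rw [natDegree_pow, natDegree_X_sub_C, mul_one]
        rw [Finset.sum_congr rfl h1, Finset.sum_const, Finset.card_univ, Fintype.card_fin,
          smul_eq_mul]
      have h1 := Polynomial.natDegree_le_of_dvd hprod hR0
      rw [hdeg1] at h1
      have h2 : ((∑ i, pP n z i) - 1).natDegree ≤ (n - 1) + (s - 1) * n := by
        refine (natDegree_sub_le _ _).trans (max_le ?_ ?_)
        · exact natDegree_sum_le_of_forall_le _ _ (fun i _ => pP_deg n z i hn)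
        · simp
      have h3 := h1.trans h2
      obtain ⟨n', rfl⟩ : ∃ n', n = n' + 1 := ⟨n - 1, by omega⟩
      obtain ⟨s', rfl⟩ : ∃ s', s = s' + 1 := ⟨s - 1, by omega⟩
      simp only [Nat.add_sub_cancel] at h3
      have h4 : (s' + 1) * (n' + 1) = s' * n' + s' + n' + 1 := by ring
      have h5 : s' * (n' + 1) = s' * n' + s' := by ring
      rw [h4, h5] at h3
      generalize s' * n' = K at h3
      omega
    rw [sub_eq_zero] at hR
    exact hR
  · -- estimate
    intro δ hδ0 hδh i j hij w hw
    have hbdd : Bornology.IsBounded (Set.range z) := (Set.finite_range z).isBounded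
    set D := Metric.diam (Set.range z) with hDdef
    have hdiam : ∀ a b : Fin s, ‖z a - z b‖ ≤ D := by
      intro a b
      rw [← dist_eq_norm]
      exact Metric.dist_le_diam_of_mem hbdd (Set.mem_range_self a) (Set.mem_range_self b)
    have hD1 : 1 ≤ D := le_trans (hsep i j hij) (hdiam i j)
    have hs2 : 2 ≤ s := by
      by_contra h
      exact hij (Fin.ext (by omega))
    set x : ℝ := D + 1 / 2 with hxdef
    have hx : ∀ k : Fin s, ‖w - z k‖ ≤ x := by
      intro k
      calc ‖w - z k‖ = ‖(w - z j) + (z j - z k)‖ := by ring_nf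
        _ ≤ ‖w - z j‖ + ‖z j - z k‖ := norm_add_le _ _
        _ ≤ δ + D := add_le_add hw (hdiam j k)
        _ ≤ x := by rw [hxdef]; linarith
    set N := n * (s - 1) with hNdef
    have hN0 : 0 < N := Nat.mul_pos hn (by omega)
    have hNsplit : N = n + n * (s - 2) := by
      have h : s - 1 = (s - 2) + 1 := by omega
      rw [hNdef, h, Nat.mul_add, Nat.mul_one, Nat.add_comm]
    have hcoeff : ∀ m, ‖(pA n z i).coeff m‖ ≤ (2 : ℝ) ^ (N - 1 + m) := by
      intro m
      refine (pA_coeff n z i hn (hz1 i) hN0 m).trans ?_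
      have h1 := choose_le_two_pow' (k := N - 1 + m) (r := N - 1) (Nat.le_add_right _ _)
      calc ((N - 1 + m).choose (N - 1) : ℝ) ≤ ((2 : ℕ) ^ (N - 1 + m) : ℕ) := by exact_mod_cast h1
        _ = (2 : ℝ) ^ (N - 1 + m) := by push_cast; ring
    have hAeval : ‖(pA n z i).eval (w - z i)‖ ≤ 2 ^ (N - 1) * ((2 * x) ^ n / 2) := by
      have hdeg : (pA n z i).natDegree < n := by
        have := pA_deg n z i hn
        omega
      rw [Polynomial.eval_eq_sum_range' hdeg]
      refine (norm_sum_le _ _).trans ?_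
      have hx0 : (0 : ℝ) ≤ x := by rw [hxdef]; linarith
      calc ∑ m ∈ Finset.range n, ‖(pA n z i).coeff m * (w - z i) ^ m‖
          ≤ ∑ m ∈ Finset.range n, 2 ^ (N - 1) * (2 * x) ^ m := by
            refine Finset.sum_le_sum fun m _ => ?_
            rw [norm_mul, norm_pow]
            calc ‖(pA n z i).coeff m‖ * ‖w - z i‖ ^ m
                ≤ 2 ^ (N - 1 + m) * x ^ m :=
                  mul_le_mul (hcoeff m) (pow_le_pow_left₀ (norm_nonneg _) (hx i) m)
                    (by positivity) (by positivity)
              _ = 2 ^ (N - 1) * (2 * x) ^ m := by rw [pow_add, mul_pow]; ring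
        _ = 2 ^ (N - 1) * ∑ m ∈ Finset.range n, (2 * x) ^ m := by rw [Finset.mul_sum]
        _ ≤ 2 ^ (N - 1) * ((2 * x) ^ n / 2) := by
            refine mul_le_mul_of_nonneg_left ?_ (by positivity)
            have h2x : (3 : ℝ) ≤ 2 * x := by rw [hxdef]; linarith
            rw [geom_sum_eq (by linarith : (2 * x) ≠ 1)]
            exact div_le_div₀ (by positivity) (by linarith) (by linarith) (by linarith)
    have hprodb : ∏ k ∈ Finset.univ.erase i, ‖w - z k‖ ^ n ≤ δ ^ n * x ^ (n * (s - 2)) := by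
      have hji : j ∈ Finset.univ.erase i := Finset.mem_erase.2 ⟨hij.symm, Finset.mem_univ j⟩
      rw [← Finset.mul_prod_erase _ _ hji]
      have hx0 : (0 : ℝ) ≤ x := by rw [hxdef]; linarith
      refine mul_le_mul (pow_le_pow_left₀ (norm_nonneg _) hw n) ?_
        (Finset.prod_nonneg fun k _ => by positivity) (by positivity)
      calc ∏ k ∈ (Finset.univ.erase i).erase j, ‖w - z k‖ ^ n
          ≤ ∏ k ∈ (Finset.univ.erase i).erase j, x ^ n :=
            Finset.prod_le_prod (fun k _ => by positivity)
              (fun k _ => pow_le_pow_left₀ (norm_nonneg _) (hx k) n)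
        _ = x ^ (n * (s - 2)) := by
            rw [Finset.prod_const, Finset.card_erase_of_mem hji,
              Finset.card_erase_of_mem (Finset.mem_univ i), Finset.card_univ, Fintype.card_fin,
              ← pow_mul]
            congr 2
    have heval : (pP n z i).eval w
        = (pA n z i).eval (w - z i) * ∏ k ∈ Finset.univ.erase i, (w - z k) ^ n := by
      rw [pP, pQ, eval_mul, eval_comp, eval_sub, eval_X, eval_C, eval_prod]
      simp only [eval_pow, eval_sub, eval_X, eval_C]
    have hx0 : (0 : ℝ) ≤ x := by rw [hxdef]; linarith
    calc ‖(pP n z i).eval w‖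
        = ‖(pA n z i).eval (w - z i)‖ * ∏ k ∈ Finset.univ.erase i, ‖w - z k‖ ^ n := by
          rw [heval, norm_mul, norm_prod]
          simp only [norm_pow]
      _ ≤ (2 ^ (N - 1) * ((2 * x) ^ n / 2)) * (δ ^ n * x ^ (n * (s - 2))) :=
          mul_le_mul hAeval hprodb (Finset.prod_nonneg fun k _ => by positivity) (by positivity)
      _ ≤ (2 * δ) ^ n * (2 * D + 1) ^ N := by
          have hy : 2 * D + 1 = 2 * x := by rw [hxdef]; ring
          have h1 : (2 : ℝ) ^ (N - 1) ≤ 2 ^ n * 2 ^ (n * (s - 2)) := by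
            rw [← pow_add]
            refine pow_le_pow_right₀ one_le_two ?_
            generalize n * (s - 2) = K at hNsplit ⊢
            omega
          have h2 : ((2 * x) ^ n / 2) ≤ (2 * x) ^ n := div_le_self (by positivity) one_le_two
          calc (2 ^ (N - 1) * ((2 * x) ^ n / 2)) * (δ ^ n * x ^ (n * (s - 2)))
              ≤ ((2 ^ n * 2 ^ (n * (s - 2))) * (2 * x) ^ n) * (δ ^ n * x ^ (n * (s - 2))) := by
                exact mul_le_mul_of_nonneg_right
                  (mul_le_mul h1 h2 (by positivity) (by positivity)) (by positivity)
            _ = (2 * δ) ^ n * ((2 * x) ^ n * (2 ^ (n * (s - 2)) * x ^ (n * (s - 2)))) := by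
                rw [mul_pow]
                ring
            _ = (2 * δ) ^ n * (2 * x) ^ N := by
                rw [hNsplit, pow_add, mul_pow (2 : ℝ) x (n * (s - 2))]
            _ = (2 * δ) ^ n * (2 * D + 1) ^ N := by rw [hy]
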